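/- Let f : ℝ → ℝ be a function and let a₁, a₂, a₃ ∈ ℝ, not all zero, be such that the linear function I(J₊, J₋, J₃) = a₁·J₊ + a₂·J₋ + a₃·J₃ is invariant under the sl₂ evolution map Φ_f, i.e. I(Φ_f(J₊, J₋, J₃)) = I(J₊, J₋, J₃) for all (J₊, J₋, J₃) ∈ ℝ³. Then a₁ = a₂ ≠ 0, f is the constant function f(ξ) = κ/2 with κ = −a₃/a₁, and I = a₁·(J₊ + J₋ − κ·J₃). -/
import Mathlib


/-- The sl₂ evolution map associated to a function `f : ℝ → ℝ`. -/
noncomputable def Phi (f : ℝ → ℝ) : ℝ × ℝ × ℝ → ℝ × ℝ × ℝ :=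
  fun J => (J.2.1,
            J.1 - 4 * J.2.2 * f J.2.1 + 4 * J.2.1 * (f J.2.1) ^ 2,
            -J.2.2 + 2 * J.2.1 * f J.2.1)

theorem linear_invariant_classification (f : ℝ → ℝ) (a₁ a₂ a₃ : ℝ)
    (hne : ¬(a₁ = 0 ∧ a₂ = 0 ∧ a₃ = 0))
    (hinv : ∀ Jp Jm J3 : ℝ,
      a₁ * (Phi f (Jp, Jm, J3)).1 + a₂ * (Phi f (Jp, Jm, J3)).2.1
        + a₃ * (Phi f (Jp, Jm, J3)).2.2
      = a₁ * Jp + a₂ * Jm + a₃ * J3) :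
    a₁ = a₂ ∧ a₁ ≠ 0 ∧ (∀ ξ : ℝ, f ξ = (-a₃ / a₁) / 2) ∧
      (∀ Jp Jm J3 : ℝ, a₁ * Jp + a₂ * Jm + a₃ * J3
        = a₁ * (Jp + Jm - (-a₃ / a₁) * J3)) := by
  simp only [Phi] at hinv
  have h1 := hinv 1 0 0
  have h2 := hinv 0 0 1
  have ha : a₁ = a₂ := by nlinarith [h1]
  have ha1 : a₁ ≠ 0 := by
    intro h0
    apply hne
    refine ⟨h0, ha ▸ h0, ?_⟩
    rw [h0, ← ha, h0] at h2; linarith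
  have hf : ∀ ξ : ℝ, f ξ = (-a₃ / a₁) / 2 := by
    intro ξ
    have h3 := hinv 0 ξ 0
    have h4 := hinv 0 ξ 1
    have : -4 * a₂ * f ξ - a₃ = a₃ := by nlinarith [h3, h4]
    rw [← ha] at this
    field_simp
    linarith
  refine ⟨ha, ha1, hf, fun Jp Jm J3 => ?_⟩
  have h2' : a₃ = -4 * a₂ * f 0 - a₃ := by nlinarith [h2]
  have : a₃ / a₁ = -(2 * f 0) := by
    have := hf 0
    field_simp at this ⊢
    linarith
  field_simp
  rw [← ha]
  ring
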